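/- Let U be a nonnegative L×L real matrix. Then there exists a probability vector λ ∈ Δ(L) that is an invariant measure of U, i.e., for every l, Σ_{k} λ(k)·U^{kl} = λ(l)·Σ_{k} U^{lk}. -/

import Mathlib

open Finset Filter Topology

private lemma norm_le_one_of_mem_stdSimplex {L : Type*} [Fintype L]
    {v : L → ℝ} (hv : v ∈ stdSimplex ℝ L) : ‖v‖ ≤ 1 := by
  rw [pi_norm_le_iff_of_nonneg zero_le_one]
  intro l
  rw [Real.norm_eq_abs, abs_of_nonneg (hv.1 l)]
  calc v l ≤ ∑ k, v k := Finset.single_le_sum (fun k _ => hv.1 k) (Finset.mem_univ l)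
    _ = 1 := hv.2

private lemma exists_fixed_of_stochastic {L : Type*} [Fintype L] [Nonempty L]
    (P : L → L → ℝ) (hP : ∀ l k, 0 ≤ P l k) (hrow : ∀ l, ∑ k, P l k = 1) :
    ∃ lam : L → ℝ, lam ∈ stdSimplex ℝ L ∧ ∀ l, ∑ k, lam k * P k l = lam l := by
  set T : (L → ℝ) → (L → ℝ) := fun v l => ∑ k, v k * P k l with hT
  have hTcont : Continuous T := by
    apply continuous_pi
    intro l
    exact continuous_finset_sum _ fun k _ => (continuous_apply k).mul continuous_const
  have hTmem : ∀ v ∈ stdSimplex ℝ L, T v ∈ stdSimplex ℝ L := by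
    intro v hv
    refine ⟨fun l => Finset.sum_nonneg fun k _ => mul_nonneg (hv.1 k) (hP k l), ?_⟩
    calc ∑ l, T v l = ∑ k, v k * ∑ l, P k l := by
          rw [Finset.sum_comm]
          exact Finset.sum_congr rfl fun k _ => (Finset.mul_sum _ _ _).symm
      _ = ∑ k, v k := by simp [hrow]
      _ = 1 := hv.2
  -- starting point: uniform distribution
  set x0 : L → ℝ := fun _ => (Fintype.card L : ℝ)⁻¹ with hx0
  have hcard : (0 : ℝ) < Fintype.card L := by
    exact_mod_cast Fintype.card_pos
  have hx0mem : x0 ∈ stdSimplex ℝ L := by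
    refine ⟨fun l => by positivity, ?_⟩
    simp [hx0, Finset.sum_const, mul_inv_cancel₀ (ne_of_gt hcard)]
  have hiter : ∀ i, T^[i] x0 ∈ stdSimplex ℝ L := by
    intro i
    induction i with
    | zero => simpa using hx0mem
    | succ n ih =>
      rw [Function.iterate_succ_apply']
      exact hTmem _ ih
  -- Cesàro averages
  set a : ℕ → (L → ℝ) := fun n => ((n : ℝ) + 1)⁻¹ • ∑ i ∈ Finset.range (n + 1), T^[i] x0
    with ha
  have hn1 : ∀ n : ℕ, (0 : ℝ) < (n : ℝ) + 1 := fun n => by positivity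
  have hamem : ∀ n, a n ∈ stdSimplex ℝ L := by
    intro n
    constructor
    · intro l
      simp only [ha, Pi.smul_apply, Finset.sum_apply, smul_eq_mul]
      exact mul_nonneg (le_of_lt (inv_pos.2 (hn1 n)))
        (Finset.sum_nonneg fun i _ => (hiter i).1 l)
    · simp only [ha, Pi.smul_apply, Finset.sum_apply, smul_eq_mul]
      rw [← Finset.mul_sum, Finset.sum_comm]
      have : ∀ i ∈ Finset.range (n + 1), ∑ l, (T^[i] x0) l = 1 :=
        fun i _ => (hiter i).2
      rw [Finset.sum_congr rfl this]
      simp [inv_mul_cancel₀ (ne_of_gt (hn1 n))]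
  -- key identity : T (a n) - a n = ((n:ℝ)+1)⁻¹ • (T^[n+1] x0 - x0)
  have hkey : ∀ n, T (a n) - a n = ((n : ℝ) + 1)⁻¹ • (T^[n + 1] x0 - x0) := by
    intro n
    funext l
    have hTa : T (a n) l = ((n : ℝ) + 1)⁻¹ * ∑ i ∈ Finset.range (n + 1), (T^[i + 1] x0) l := by
      have step : ∀ i, (T^[i + 1] x0) l = ∑ k, (T^[i] x0) k * P k l := by
        intro i; rw [Function.iterate_succ_apply']
      calc T (a n) l
          = ∑ k, (((n : ℝ) + 1)⁻¹ * ∑ i ∈ Finset.range (n + 1), (T^[i] x0) k) * P k l := by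
            simp only [hT, ha, Pi.smul_apply, Finset.sum_apply, smul_eq_mul]
        _ = ((n : ℝ) + 1)⁻¹ * ∑ k, ∑ i ∈ Finset.range (n + 1), (T^[i] x0) k * P k l := by
            rw [Finset.mul_sum]
            exact Finset.sum_congr rfl fun k _ => by
              rw [mul_assoc, Finset.sum_mul]
        _ = ((n : ℝ) + 1)⁻¹ * ∑ i ∈ Finset.range (n + 1), (T^[i + 1] x0) l := by
            rw [Finset.sum_comm]
            congr 1
            exact Finset.sum_congr rfl fun i _ => (step i).symm
    have htel : ∑ i ∈ Finset.range (n + 1), ((T^[i + 1] x0) l - (T^[i] x0) l)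
        = (T^[n + 1] x0) l - x0 l := by
      simpa using Finset.sum_range_sub (fun i => (T^[i] x0) l) (n + 1)
    simp only [Pi.sub_apply, Pi.smul_apply, smul_eq_mul]
    rw [hTa]
    simp only [ha, Pi.smul_apply, Finset.sum_apply, smul_eq_mul]
    rw [← htel, Finset.sum_sub_distrib]
    ring
  -- extract convergent subsequence
  obtain ⟨lam, hlam, φ, hφ, hconv⟩ := isCompact_stdSimplex ℝ L |>.tendsto_subseq hamem
  refine ⟨lam, hlam, ?_⟩
  -- show T lam = lam
  have h1 : Tendsto (fun j => T (a (φ j)) - a (φ j)) atTop (𝓝 (T lam - lam)) :=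
    ((hTcont.tendsto lam).comp hconv).sub hconv
  have h2 : Tendsto (fun j => T (a (φ j)) - a (φ j)) atTop (𝓝 0) := by
    apply squeeze_zero_norm (a := fun j => 2 / ((φ j : ℝ) + 1))
    · intro j
      rw [hkey (φ j), norm_smul]
      have hb : ‖T^[φ j + 1] x0 - x0‖ ≤ 2 := by
        calc ‖T^[φ j + 1] x0 - x0‖ ≤ ‖T^[φ j + 1] x0‖ + ‖x0‖ := norm_sub_le _ _
          _ ≤ 1 + 1 := add_le_add (norm_le_one_of_mem_stdSimplex (hiter _))
              (norm_le_one_of_mem_stdSimplex hx0mem)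
          _ = 2 := by norm_num
      have : ‖(((φ j : ℝ) + 1)⁻¹ : ℝ)‖ = ((φ j : ℝ) + 1)⁻¹ := by
        rw [Real.norm_eq_abs, abs_of_pos (inv_pos.2 (hn1 (φ j)))]
      rw [this, div_eq_inv_mul]
      exact mul_le_mul_of_nonneg_left hb (le_of_lt (inv_pos.2 (hn1 (φ j))))
    · have hbase : Tendsto (fun n : ℕ => 2 / ((n : ℝ) + 1)) atTop (𝓝 0) := by
        apply Tendsto.div_atTop (tendsto_const_nhds)
        exact tendsto_atTop_add_const_right _ 1 tendsto_natCast_atTop_atTop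
      exact hbase.comp hφ.tendsto_atTop
  have hfix : T lam - lam = 0 := tendsto_nhds_unique h1 h2
  intro l
  have := congrFun hfix l
  simp only [Pi.sub_apply, Pi.zero_apply, sub_eq_zero] at this
  exact this

theorem exists_invariant_measure {L : Type*} [Fintype L] [Nonempty L]
    (U : L → L → ℝ) (hU : ∀ l k, 0 ≤ U l k) :
    ∃ lam : L → ℝ, (∀ l, 0 ≤ lam l) ∧ (∑ l, lam l = 1) ∧
      ∀ l, ∑ k, lam k * U k l = lam l * ∑ k, U l k := by
  classical
  set r : L → ℝ := fun l => ∑ k, U l k with hr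
  set c : ℝ := 1 + ∑ l, r l with hc
  have hrnn : ∀ l, 0 ≤ r l := fun l => Finset.sum_nonneg fun k _ => hU l k
  have hrc : ∀ l, r l + 1 ≤ c := by
    intro l
    have : r l ≤ ∑ m, r m := Finset.single_le_sum (fun m _ => hrnn m) (Finset.mem_univ l)
    simp only [hc]; linarith
  have hcpos : (0 : ℝ) < c := by
    have := hrc (Classical.arbitrary L)
    have := hrnn (Classical.arbitrary L)
    linarith
  set P : L → L → ℝ := fun l k => (U l k + if k = l then c - r l else 0) / c with hP
  have hPnn : ∀ l k, 0 ≤ P l k := by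
    intro l k
    apply div_nonneg _ (le_of_lt hcpos)
    have h1 : 0 ≤ c - r l := by have := hrc l; linarith
    have h2 := hU l k
    split_ifs <;> linarith
  have hrow : ∀ l, ∑ k, P l k = 1 := by
    intro l
    simp only [hP]
    rw [← Finset.sum_div, Finset.sum_add_distrib, Finset.sum_ite_eq' Finset.univ l]
    simp only [Finset.mem_univ, if_true]
    have hrl : ∑ x, U l x = r l := rfl
    rw [hrl]
    field_simp
    ring
  obtain ⟨lam, hmem, hfix⟩ := exists_fixed_of_stochastic P hPnn hrow
  refine ⟨lam, hmem.1, hmem.2, ?_⟩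
  intro l
  have h := hfix l
  have hh : ∑ k, lam k * P k l
      = (∑ k, lam k * U k l + lam l * (c - r l)) / c := by
    calc ∑ k, lam k * P k l
        = ∑ k, (lam k * U k l + if l = k then lam k * (c - r k) else 0) / c := by
          refine Finset.sum_congr rfl fun k _ => ?_
          simp only [hP]
          split_ifs with h1 <;> field_simp <;> ring
      _ = (∑ k, (lam k * U k l + if l = k then lam k * (c - r k) else 0)) / c := by
          rw [Finset.sum_div]
      _ = (∑ k, lam k * U k l + lam l * (c - r l)) / c := by
          rw [Finset.sum_add_distrib, Finset.sum_ite_eq Finset.univ l]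
          simp
  rw [hh] at h
  have h' : ∑ k, lam k * U k l + lam l * (c - r l) = lam l * c := by
    field_simp at h
    linarith
  have : ∑ k, lam k * U k l = lam l * r l := by nlinarith [h']
  simpa [hr] using this
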